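/- Let Q be a probability distribution on ℝ with finite second moment, τ ∈ (0,1), and let t* be the τ-expectile of Q. Then for all t ∈ ℝ: c_τ (t - t*)² ≤ C_{L_τ,Q}(t) - C_{L_τ,Q}(t*) ≤ C_τ (t - t*)², where c_τ = min{τ, 1-τ} and C_τ = max{τ, 1-τ}. -/

import Mathlib

open MeasureTheory

noncomputable def alsLoss (τ y t : ℝ) : ℝ :=
  if y < t then (1 - τ) * (y - t) ^ 2 else τ * (y - t) ^ 2

theorem excess_inner_risk_bounds (Q : Measure ℝ) [IsProbabilityMeasure Q]
    (hQ2 : Integrable (fun y : ℝ => y ^ 2) Q)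
    (τ : ℝ) (hτ : τ ∈ Set.Ioo (0 : ℝ) 1) (tstar : ℝ)
    (hfoc : τ * ∫ y in Set.Ici tstar, (y - tstar) ∂Q
      = (1 - τ) * ∫ y in Set.Iio tstar, (tstar - y) ∂Q) :
    ∀ t : ℝ,
      min τ (1 - τ) * (t - tstar) ^ 2
          ≤ (∫ y, alsLoss τ y t ∂Q) - (∫ y, alsLoss τ y tstar ∂Q)
      ∧ (∫ y, alsLoss τ y t ∂Q) - (∫ y, alsLoss τ y tstar ∂Q)
          ≤ max τ (1 - τ) * (t - tstar) ^ 2 := by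
  obtain ⟨hτ0, hτ1⟩ := hτ
  have hid : Integrable (fun y : ℝ => y) Q := by
    have h2 : MemLp (fun y : ℝ => y) 2 Q :=
      (memLp_two_iff_integrable_sq measurable_id.aestronglyMeasurable).mpr hQ2
    exact memLp_one_iff_integrable.mp (h2.mono_exponent (by norm_num))
  have hsq : ∀ t : ℝ, Integrable (fun y : ℝ => (y - t) ^ 2) Q := by
    intro t
    have : (fun y : ℝ => (y - t) ^ 2) = fun y => (y ^ 2 - (2 * t) * y) + t ^ 2 := by
      funext y; ring
    rw [this]
    exact (hQ2.sub (hid.const_mul (2 * t))).add (integrable_const _)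
  have hmeas : ∀ t : ℝ, Measurable fun y => alsLoss τ y t := by
    intro t
    unfold alsLoss
    exact Measurable.ite measurableSet_Iio (by fun_prop) (by fun_prop)
  have hals : ∀ t : ℝ, Integrable (fun y => alsLoss τ y t) Q := by
    intro t
    refine (hsq t).mono' (hmeas t).aestronglyMeasurable ?_
    filter_upwards with y
    unfold alsLoss
    split_ifs with h
    · rw [Real.norm_eq_abs, abs_mul, abs_of_nonneg (sq_nonneg (y - t)),
        abs_of_nonneg (by linarith : (0:ℝ) ≤ 1 - τ)]
      nlinarith [sq_nonneg (y - t)]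
    · rw [Real.norm_eq_abs, abs_mul, abs_of_nonneg (sq_nonneg (y - t)),
        abs_of_nonneg (le_of_lt hτ0)]
      nlinarith [sq_nonneg (y - t)]
  set g : ℝ → ℝ := fun y => (if y < tstar then 1 - τ else τ) * (y - tstar) with hgdef
  have hgm : Measurable g := Measurable.mul
    (Measurable.ite measurableSet_Iio measurable_const measurable_const) (by fun_prop)
  have hg : Integrable g Q := by
    refine ((hid.sub (integrable_const tstar)).abs).mono' hgm.aestronglyMeasurable ?_
    filter_upwards with y
    rw [Real.norm_eq_abs, hgdef, abs_mul]
    have : |if y < tstar then 1 - τ else τ| ≤ 1 := by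
      split_ifs <;> rw [abs_of_nonneg (by linarith)] <;> linarith
    calc |if y < tstar then 1 - τ else τ| * |y - tstar| ≤ 1 * |y - tstar| :=
          mul_le_mul_of_nonneg_right this (abs_nonneg _)
      _ = |y - tstar| := one_mul _
  have hgzero : ∫ y, g y ∂Q = 0 := by
    have hsplit : ∫ y in Set.Iio tstar, g y ∂Q + ∫ y in Set.Ici tstar, g y ∂Q
        = ∫ y, g y ∂Q := by
      have := integral_add_compl (measurableSet_Iio : MeasurableSet (Set.Iio tstar)) hg
      simpa [Set.compl_Iio] using this
    have hIio : ∫ y in Set.Iio tstar, g y ∂Q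
        = -((1 - τ) * ∫ y in Set.Iio tstar, (tstar - y) ∂Q) := by
      rw [show ∫ y in Set.Iio tstar, g y ∂Q
          = ∫ y in Set.Iio tstar, -((1 - τ) * (tstar - y)) ∂Q from
        setIntegral_congr_fun measurableSet_Iio (fun y hy => by
          simp only [hgdef]
          rw [if_pos (show y < tstar from hy)]; ring)]
      rw [integral_neg, integral_const_mul]
    have hIci : ∫ y in Set.Ici tstar, g y ∂Q
        = τ * ∫ y in Set.Ici tstar, (y - tstar) ∂Q := by
      rw [show ∫ y in Set.Ici tstar, g y ∂Q
          = ∫ y in Set.Ici tstar, τ * (y - tstar) ∂Q from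
        setIntegral_congr_fun measurableSet_Ici (fun y hy => by
          simp only [hgdef]
          rw [if_neg (not_lt.mpr hy)])]
      rw [integral_const_mul]
    rw [← hsplit, hIio, hIci]
    linarith [hfoc]
  intro t
  have key : ∀ y : ℝ,
      min τ (1 - τ) * (t - tstar) ^ 2
        ≤ alsLoss τ y t - alsLoss τ y tstar + 2 * (t - tstar) * g y ∧
      alsLoss τ y t - alsLoss τ y tstar + 2 * (t - tstar) * g y
        ≤ max τ (1 - τ) * (t - tstar) ^ 2 := by
    intro y
    have hsq1 := sq_nonneg (t - tstar)
    unfold alsLoss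
    simp only [hgdef]
    split_ifs with h1 h2 h2
    · rcases le_total τ (1 - τ) with h | h <;>
        [rw [min_eq_left h, max_eq_right h]; rw [min_eq_right h, max_eq_left h]] <;>
        constructor <;> nlinarith [hsq1]
    · have hB : (y - t) ^ 2 ≤ (t - tstar) ^ 2 := by
        nlinarith [mul_nonneg (by linarith : (0:ℝ) ≤ y - tstar)
            (by linarith : (0:ℝ) ≤ t - y),
          mul_nonneg (by linarith : (0:ℝ) ≤ y - tstar)
            (by linarith : (0:ℝ) ≤ t - tstar)]
      rcases le_total τ (1 - τ) with h | h <;>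
        [rw [min_eq_left h, max_eq_right h]; rw [min_eq_right h, max_eq_left h]] <;>
        constructor <;> nlinarith [hB, sq_nonneg (y - t), hsq1]
    · have hB : (y - t) ^ 2 ≤ (t - tstar) ^ 2 := by
        nlinarith [mul_nonneg (by linarith : (0:ℝ) ≤ tstar - y)
            (by linarith : (0:ℝ) ≤ y - t),
          mul_nonneg (by linarith : (0:ℝ) ≤ tstar - y)
            (by linarith : (0:ℝ) ≤ tstar - t)]
      rcases le_total τ (1 - τ) with h | h <;>
        [rw [min_eq_left h, max_eq_right h]; rw [min_eq_right h, max_eq_left h]] <;>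
        constructor <;> nlinarith [hB, sq_nonneg (y - t), hsq1]
    · rcases le_total τ (1 - τ) with h | h <;>
        [rw [min_eq_left h, max_eq_right h]; rw [min_eq_right h, max_eq_left h]] <;>
        constructor <;> nlinarith [hsq1]
  have hf : Integrable
      (fun y => alsLoss τ y t - alsLoss τ y tstar + 2 * (t - tstar) * g y) Q :=
    ((hals t).sub (hals tstar)).add (hg.const_mul (2 * (t - tstar)))
  have hfeq : ∫ y, (alsLoss τ y t - alsLoss τ y tstar + 2 * (t - tstar) * g y) ∂Q
      = (∫ y, alsLoss τ y t ∂Q) - (∫ y, alsLoss τ y tstar ∂Q) := by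
    have h1 := integral_add ((hals t).sub (hals tstar)) (hg.const_mul (2 * (t - tstar)))
    simp only [Pi.sub_apply] at h1
    rw [h1, integral_sub (hals t) (hals tstar), integral_const_mul, hgzero]
    ring
  constructor
  · have := integral_mono (integrable_const (min τ (1 - τ) * (t - tstar) ^ 2)) hf
      (fun y => (key y).1)
    rw [hfeq] at this
    simpa [integral_const] using this
  · have := integral_mono hf (integrable_const (max τ (1 - τ) * (t - tstar) ^ 2))
      (fun y => (key y).2)
    rw [hfeq] at this
    simpa [integral_const] using this
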